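/- (Orthoplex bound, complex case) Let φ_1, ..., φ_N be unit vectors in ℂ^M with N > M^2. Then the coherence satisfies max_{j ≠ l} |⟨φ_j, φ_l⟩| ≥ 1/√M. Consequently, the Grassmannian constant μ_{N,M}(ℂ), the infimum of the coherence over all sets of N unit vectors in ℂ^M, is at least 1/√M when N > M^2. -/

import Mathlib

open scoped RealInnerProductSpace ComplexConjugate
open Finset

private lemma sum_antisymm_aux {M : ℕ} (g : Fin M → Fin M → ℝ)
    (hg : ∀ a b, g b a = - g a b) : (∑ a, ∑ b, g a b) = 0 := by
  have h1 : (∑ a, ∑ b, g b a) = ∑ a, ∑ b, g a b := Finset.sum_comm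
  have h2 : (∑ a, ∑ b, g b a) = - ∑ a, ∑ b, g a b := by
    rw [← Finset.sum_neg_distrib]
    exact Finset.sum_congr rfl fun a _ => by
      rw [← Finset.sum_neg_distrib]
      exact Finset.sum_congr rfl fun b _ => hg a b
  linarith

/-- The map sending `x` to (the real+imag flattening of) the rank-one matrix `x x*`. -/
noncomputable def Gmap {M : ℕ} (x : EuclideanSpace ℂ (Fin M)) :
    EuclideanSpace ℝ (Fin M × Fin M) :=
  WithLp.toLp 2 (fun p : Fin M × Fin M => (x p.1 * conj (x p.2)).re + (x p.1 * conj (x p.2)).im)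

lemma inner_Gmap {M : ℕ} (x y : EuclideanSpace ℂ (Fin M)) :
    ⟪Gmap x, Gmap y⟫ = ‖(inner ℂ x y : ℂ)‖ ^ 2 := by
  have hconj : ∀ a b : Fin M, (x b * conj (x a)) = conj (x a * conj (x b)) := by
    intro a b
    rw [map_mul, Complex.conj_conj, mul_comm]
  have hconjy : ∀ a b : Fin M, (y b * conj (y a)) = conj (y a * conj (y b)) := by
    intro a b
    rw [map_mul, Complex.conj_conj, mul_comm]
  have hlhs : ⟪Gmap x, Gmap y⟫ = ∑ a, ∑ b,
      ((x a * conj (x b)).re + (x a * conj (x b)).im)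
        * ((y a * conj (y b)).re + (y a * conj (y b)).im) := by
    simp [Gmap, PiLp.inner_apply, RCLike.inner_apply, Fintype.sum_prod_type]
    exact Finset.sum_congr rfl fun _ _ => Finset.sum_congr rfl fun _ _ => mul_comm _ _
  have hsplit : ∀ a b : Fin M,
      ((x a * conj (x b)).re + (x a * conj (x b)).im)
        * ((y a * conj (y b)).re + (y a * conj (y b)).im)
      = ((x a * conj (x b)).re * (y a * conj (y b)).re
          + (x a * conj (x b)).im * (y a * conj (y b)).im)
        + ((x a * conj (x b)).re * (y a * conj (y b)).im
          + (x a * conj (x b)).im * (y a * conj (y b)).re) := by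
    intro a b; ring
  have hcross : (∑ a, ∑ b, ((x a * conj (x b)).re * (y a * conj (y b)).im
      + (x a * conj (x b)).im * (y a * conj (y b)).re)) = 0 := by
    apply sum_antisymm_aux
    intro a b
    rw [hconj, hconjy, Complex.conj_re, Complex.conj_re, Complex.conj_im, Complex.conj_im]
    ring
  have hmain : (∑ a, ∑ b, ((x a * conj (x b)).re * (y a * conj (y b)).re
      + (x a * conj (x b)).im * (y a * conj (y b)).im))
      = ‖(inner ℂ x y : ℂ)‖ ^ 2 := by
    have hre : ∀ a b : Fin M,
        (x a * conj (x b)).re * (y a * conj (y b)).re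
          + (x a * conj (x b)).im * (y a * conj (y b)).im
        = (conj (x a * conj (x b)) * (y a * conj (y b))).re := by
      intro a b
      simp only [Complex.mul_re, Complex.mul_im, Complex.conj_re, Complex.conj_im]
      ring
    simp_rw [hre]
    have : (∑ a, ∑ b, (conj (x a * conj (x b)) * (y a * conj (y b))).re)
        = ((∑ a, ∑ b, conj (x a * conj (x b)) * (y a * conj (y b)))).re := by
      rw [Complex.re_sum]
      exact Finset.sum_congr rfl fun a _ => (Complex.re_sum _ _).symm
    rw [this]
    have hfac : (∑ a, ∑ b, conj (x a * conj (x b)) * (y a * conj (y b)))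
        = (inner ℂ x y : ℂ) * conj (inner ℂ x y : ℂ) := by
      have h1 : ∀ a b : Fin M, conj (x a * conj (x b)) * (y a * conj (y b))
          = (conj (x a) * y a) * (x b * conj (y b)) := by
        intro a b
        rw [map_mul, Complex.conj_conj]; ring
      simp_rw [h1, ← Finset.mul_sum, ← Finset.sum_mul]
      have h2 : (inner ℂ x y : ℂ) = ∑ a, conj (x a) * y a := by
        simp [PiLp.inner_apply, RCLike.inner_apply]
        exact Finset.sum_congr rfl fun _ _ => mul_comm _ _
      have h3 : conj (inner ℂ x y : ℂ) = ∑ b, x b * conj (y b) := by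
        rw [h2, map_sum]
        exact Finset.sum_congr rfl fun b _ => by rw [map_mul, Complex.conj_conj]
      rw [h3, h2]
    rw [hfac, Complex.mul_conj, Complex.ofReal_re, Complex.normSq_eq_norm_sq]
  rw [hlhs]
  simp_rw [hsplit]
  rw [Finset.sum_congr rfl fun a _ => Finset.sum_add_distrib, Finset.sum_add_distrib,
    hcross, hmain, add_zero]

/-- The identity "matrix" as a vector. -/
noncomputable def idvec (M : ℕ) : EuclideanSpace ℝ (Fin M × Fin M) :=
  WithLp.toLp 2 (fun p : Fin M × Fin M => if p.1 = p.2 then (1 : ℝ) else 0)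

lemma inner_idvec_Gmap {M : ℕ} (x : EuclideanSpace ℂ (Fin M)) :
    ⟪idvec M, Gmap x⟫ = ‖x‖ ^ 2 := by
  have h1 : ⟪idvec M, Gmap x⟫ = ∑ a : Fin M, ((x a * conj (x a)).re + (x a * conj (x a)).im) := by
    simp [idvec, Gmap, PiLp.inner_apply, RCLike.inner_apply, Fintype.sum_prod_type,
      Finset.sum_ite_eq, ite_mul]
  have h2 : ∀ a : Fin M, (x a * conj (x a)).re + (x a * conj (x a)).im = ‖x a‖ ^ 2 := by
    intro a
    rw [Complex.mul_conj]
    simp only [Complex.ofReal_re, Complex.ofReal_im, add_zero]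
    rw [Complex.sq_norm]
  rw [h1]
  simp_rw [h2]
  rw [EuclideanSpace.norm_eq, Real.sq_sqrt (Finset.sum_nonneg fun i _ => sq_nonneg _)]

lemma inner_idvec_idvec (M : ℕ) : ⟪idvec M, idvec M⟫ = (M : ℝ) := by
  rw [PiLp.inner_apply]
  simp [idvec, PiLp.inner_apply, RCLike.inner_apply, Fintype.sum_prod_type,
    Finset.sum_ite_eq, ite_mul]
  rw [Finset.card_filter, Fintype.sum_prod_type]
  simp

lemma inner_Gmap_idvec {M : ℕ} (x : EuclideanSpace ℂ (Fin M)) :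
    ⟪Gmap x, idvec M⟫ = ‖x‖ ^ 2 := by
  rw [real_inner_comm]; exact inner_idvec_Gmap x

/-- Vectors with pairwise negative inner products: dropping one yields a
linearly independent family. -/
lemma neg_inner_linearIndependent {V : Type*} [NormedAddCommGroup V] [InnerProductSpace ℝ V]
    {n : ℕ} (v : Fin (n + 1) → V)
    (hv : ∀ i j, i ≠ j → ⟪v i, v j⟫ < 0) :
    LinearIndependent ℝ (v ∘ Fin.succ) := by
  rw [Fintype.linearIndependent_iff]
  intro c hc
  set a : Fin n → ℝ := fun i => max (c i) 0 with ha
  set b : Fin n → ℝ := fun i => max (-c i) 0 with hb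
  have hab : ∀ i, c i = a i - b i := fun i => (max_zero_sub_max_neg_zero_eq_self (c i)).symm
  have ha0 : ∀ i, 0 ≤ a i := fun i => le_max_right _ _
  have hb0 : ∀ i, 0 ≤ b i := fun i => le_max_right _ _
  have habz : ∀ i, a i * b i = 0 := by
    intro i
    rcases le_or_gt (c i) 0 with h | h
    · have : a i = 0 := max_eq_right h
      rw [this, zero_mul]
    · have : b i = 0 := max_eq_right (by linarith)
      rw [this, mul_zero]
  have hweq : (∑ i, a i • v i.succ) = ∑ i, b i • v i.succ := by
    have h : (∑ i, a i • v i.succ) - ∑ i, b i • v i.succ = ∑ i, c i • (v ∘ Fin.succ) i := by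
      rw [← Finset.sum_sub_distrib]
      exact Finset.sum_congr rfl fun i _ => by
        rw [Function.comp_apply, ← sub_smul, ← hab]
    exact sub_eq_zero.mp (h.trans hc)
  have hwzero : (∑ i, a i • v i.succ) = 0 := by
    rw [← real_inner_self_nonpos]
    calc ⟪∑ i, a i • v i.succ, ∑ i, a i • v i.succ⟫
        = ⟪∑ i, a i • v i.succ, ∑ i, b i • v i.succ⟫ := by rw [← hweq]
      _ = ∑ i, ∑ j, a i * (b j * ⟪v i.succ, v j.succ⟫) := by
          rw [sum_inner]
          exact Finset.sum_congr rfl fun i _ => by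
            rw [real_inner_smul_left, inner_sum, Finset.mul_sum]
            exact Finset.sum_congr rfl fun j _ => by rw [real_inner_smul_right]
      _ ≤ 0 := by
          apply Finset.sum_nonpos
          intro i _
          apply Finset.sum_nonpos
          intro j _
          rcases eq_or_ne i j with rfl | hij
          · rw [← mul_assoc, mul_comm (a i) (b i), mul_comm (b i) (a i), habz, zero_mul]
          · have hlt : ⟪v i.succ, v j.succ⟫ < 0 :=
              hv _ _ (fun h => hij (Fin.succ_injective _ h))
            have := mul_nonneg (ha0 i) (hb0 j)
            nlinarith
  have hkey : ∀ (d : Fin n → ℝ), (∀ i, 0 ≤ d i) → (∑ i, d i • v i.succ) = 0 →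
      ∀ i, d i = 0 := by
    intro d hd hsum i
    have h0 : (0 : ℝ) = ∑ j, d j * ⟪v 0, v j.succ⟫ := by
      have : ⟪v 0, ∑ j, d j • v j.succ⟫ = ∑ j, d j * ⟪v 0, v j.succ⟫ := by
        rw [inner_sum]
        exact Finset.sum_congr rfl fun j _ => real_inner_smul_right _ _ _
      rw [← this, hsum, inner_zero_right]
    have hnp : ∀ j ∈ Finset.univ, d j * ⟪v 0, v j.succ⟫ ≤ 0 := by
      intro j _
      have hlt : ⟪v 0, v j.succ⟫ < 0 := hv _ _ (Fin.succ_ne_zero j).symm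
      exact mul_nonpos_of_nonneg_of_nonpos (hd j) hlt.le
    have := (Finset.sum_eq_zero_iff_of_nonpos hnp).mp h0.symm i (Finset.mem_univ i)
    have hlt : ⟪v 0, v i.succ⟫ < 0 := hv _ _ (Fin.succ_ne_zero i).symm
    rcases mul_eq_zero.mp this with h | h
    · exact h
    · exact absurd h hlt.ne
  intro i
  have haz : a i = 0 := hkey a ha0 hwzero i
  have hbz : b i = 0 := hkey b hb0 (hweq ▸ hwzero) i
  rw [hab i, haz, hbz, sub_zero]

lemma orthoplex_key {M N : ℕ} (hN : M ^ 2 < N) (hM : 0 < M)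
    (φ : Fin N → EuclideanSpace ℂ (Fin M)) (hunit : ∀ j, ‖φ j‖ = 1) :
    ∃ j l, j ≠ l ∧ 1 / Real.sqrt M ≤ ‖(inner ℂ (φ j) (φ l) : ℂ)‖ := by
  by_contra hcon
  push_neg at hcon
  obtain ⟨n, rfl⟩ : ∃ n, N = n + 1 :=
    ⟨N - 1, (Nat.succ_pred_eq_of_pos (lt_of_le_of_lt (Nat.zero_le _) hN)).symm⟩
  have hMR : (0 : ℝ) < M := by exact_mod_cast hM
  set T : Fin (n + 1) → EuclideanSpace ℝ (Fin M × Fin M) :=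
    fun j => Gmap (φ j) - (M : ℝ)⁻¹ • idvec M with hT
  have hTinner : ∀ j l, ⟪T j, T l⟫ = ‖(inner ℂ (φ j) (φ l) : ℂ)‖ ^ 2 - (M : ℝ)⁻¹ := by
    intro j l
    rw [hT]
    simp only
    rw [inner_sub_left, inner_sub_right, inner_sub_right, real_inner_smul_left,
      real_inner_smul_left, real_inner_smul_right, real_inner_smul_right,
      inner_Gmap, inner_Gmap_idvec, inner_idvec_Gmap, inner_idvec_idvec, hunit j, hunit l]
    field_simp
    ring
  have horth : ∀ j, ⟪idvec M, T j⟫ = 0 := by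
    intro j
    rw [hT]
    simp only
    rw [inner_sub_right, real_inner_smul_right, inner_idvec_Gmap, inner_idvec_idvec, hunit j]
    field_simp
    ring
  have hneg : ∀ j l, j ≠ l → ⟪T j, T l⟫ < 0 := by
    intro j l hjl
    rw [hTinner]
    have h1 : ‖(inner ℂ (φ j) (φ l) : ℂ)‖ < 1 / Real.sqrt M := hcon j l hjl
    have h2 : (0 : ℝ) ≤ ‖(inner ℂ (φ j) (φ l) : ℂ)‖ := norm_nonneg _
    have h3 : (1 / Real.sqrt M) ^ 2 = (M : ℝ)⁻¹ := by
      rw [div_pow, one_pow, Real.sq_sqrt hMR.le, one_div]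
    nlinarith [Real.sqrt_pos.mpr hMR]
  have indep1 : LinearIndependent ℝ (T ∘ Fin.succ) := neg_inner_linearIndependent T hneg
  have hidne : idvec M ≠ 0 := by
    intro h
    have := inner_idvec_idvec M
    rw [h, inner_zero_left] at this
    exact hMR.ne (by exact_mod_cast this)
  have indep2 : LinearIndependent ℝ (Fin.cons (idvec M) (T ∘ Fin.succ) :
      Fin (n + 1) → EuclideanSpace ℝ (Fin M × Fin M)) := by
    rw [linearIndependent_fin_cons]
    refine ⟨indep1, fun hmem => ?_⟩
    have hsub : Set.range (T ∘ Fin.succ) ⊆ (Submodule.span ℝ {idvec M})ᗮ := by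
      rintro x ⟨i, rfl⟩
      rw [SetLike.mem_coe, Submodule.mem_orthogonal_singleton_iff_inner_right]
      exact horth _
    have hle : Submodule.span ℝ (Set.range (T ∘ Fin.succ)) ≤ (Submodule.span ℝ {idvec M})ᗮ :=
      Submodule.span_le.mpr hsub
    have := Submodule.mem_orthogonal_singleton_iff_inner_right.mp (hle hmem)
    rw [inner_idvec_idvec] at this
    exact hMR.ne' (by exact_mod_cast this)
  have hcard := indep2.fintype_card_le_finrank
  rw [finrank_euclideanSpace] at hcard
  simp only [Fintype.card_fin, Fintype.card_prod] at hcard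
  have : M ^ 2 = M * M := sq M
  omega

/-- The coherence of a family of `N` vectors in `ℂ^M`: the supremum of
`|⟨φ_j, φ_l⟩|` over all pairs `j ≠ l`. -/
noncomputable def coherence {M N : ℕ} (φ : Fin N → EuclideanSpace ℂ (Fin M)) : ℝ :=
  ⨆ p : {p : Fin N × Fin N // p.1 ≠ p.2}, ‖(inner ℂ (φ (p : Fin N × Fin N).1) (φ (p : Fin N × Fin N).2) : ℂ)‖

/-- The Grassmannian constant `μ_{N,M}(ℂ)`: the infimum of the coherence over all
families of `N` unit vectors in `ℂ^M`. -/
noncomputable def grassmannianConst (N M : ℕ) : ℝ :=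
  ⨅ φ : {φ : Fin N → EuclideanSpace ℂ (Fin M) // ∀ j, ‖φ j‖ = 1},
    coherence (φ : Fin N → EuclideanSpace ℂ (Fin M))

/-- (Orthoplex bound, complex case.) If `φ_1, ..., φ_N` are unit
vectors in `ℂ^M` with `N > M²`, then `max_{j ≠ l} |⟨φ_j, φ_l⟩| ≥ 1/√M`; consequently
the Grassmannian constant `μ_{N,M}(ℂ)` is at least `1/√M` when `N > M²`. -/
theorem orthoplex_bound_complex {M N : ℕ} (hN : M ^ 2 < N)
    (φ : Fin N → EuclideanSpace ℂ (Fin M))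
    (hunit : ∀ j, ‖φ j‖ = 1) :
    (∃ j l, j ≠ l ∧ 1 / Real.sqrt M ≤ ‖(inner ℂ (φ j) (φ l) : ℂ)‖) ∧
      1 / Real.sqrt M ≤ grassmannianConst N M := by
  rcases Nat.eq_zero_or_pos M with hM0 | hM
  · exfalso
    subst hM0
    have h0 : (0 : ℕ) < N := by simpa using hN
    have h1 := hunit ⟨0, h0⟩
    have hz : φ ⟨0, h0⟩ = 0 := Subsingleton.elim _ _
    rw [hz, norm_zero] at h1
    norm_num at h1
  · refine ⟨orthoplex_key hN hM φ hunit, ?_⟩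
    haveI : Nonempty {φ : Fin N → EuclideanSpace ℂ (Fin M) // ∀ j, ‖φ j‖ = 1} :=
      ⟨⟨fun _ => EuclideanSpace.single ⟨0, hM⟩ 1, fun j => by
        rw [EuclideanSpace.norm_single]; norm_num⟩⟩
    rw [grassmannianConst]
    apply le_ciInf
    intro ψ
    obtain ⟨j, l, hjl, hle⟩ := orthoplex_key hN hM ψ.1 ψ.2
    have hbdd : BddAbove (Set.range fun p : {p : Fin N × Fin N // p.1 ≠ p.2} =>
        ‖(inner ℂ (ψ.1 (p : Fin N × Fin N).1) (ψ.1 (p : Fin N × Fin N).2) : ℂ)‖) := by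
      refine ⟨1, ?_⟩
      rintro r ⟨p, rfl⟩
      calc ‖(inner ℂ (ψ.1 (p : Fin N × Fin N).1) (ψ.1 (p : Fin N × Fin N).2) : ℂ)‖
          ≤ ‖ψ.1 (p : Fin N × Fin N).1‖ * ‖ψ.1 (p : Fin N × Fin N).2‖ := norm_inner_le_norm _ _
        _ = 1 := by rw [ψ.2, ψ.2, mul_one]
    rw [coherence]
    exact le_ciSup_of_le hbdd ⟨(j, l), hjl⟩ hle
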